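/- Let X_1,…,X_n be i.i.d. with density f on [x_L, x_R), 0 < δ ≤ f ≤ Δ, and let K be nonnegative and compactly supported. Then the local quadratic (p = 2) local polynomial density estimator f̂(x_R) does not have a finite second moment. -/

import Mathlib

open MeasureTheory Matrix
open scoped Classical

/-- The local quadratic (p = 2) density estimator of Cattaneo–Jansson–Ma at `xR`: the second
coefficient (first-derivative coefficient) of the weighted least squares fit of the empirical
CDF values `F̂(Xᵢ)` on `(1, Xᵢ - xR, (Xᵢ - xR)²)` with weights `K((Xᵢ - xR)/h)`. -/
noncomputable def lpd2Slope (n : ℕ) (K : ℝ → ℝ) (h xR : ℝ) (ω : Fin n → ℝ) : ℝ :=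
  let w : Fin n → ℝ := fun i => K ((ω i - xR) / h)
  let Fhat : Fin n → ℝ := fun i =>
    (n : ℝ)⁻¹ * ((Finset.univ.filter fun j => ω j ≤ ω i).card : ℝ)
  let G : Matrix (Fin 3) (Fin 3) ℝ :=
    Matrix.of fun k l => ∑ i, w i * (ω i - xR) ^ ((k : ℕ) + (l : ℕ))
  let b : Fin 3 → ℝ := fun k => ∑ i, w i * (ω i - xR) ^ (k : ℕ) * Fhat i
  (G⁻¹ *ᵥ b) 1

def boxIval (xL α L : ℝ) (k : ℕ) (v : ℕ) : Set ℝ :=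
  if v = 0 then Set.Ioo α (α + L / 2 ^ (k + 3))
  else if v = 1 then Set.Ioo (α + L / 2 ^ (k + 1)) (α + L / 2 ^ (k + 1) + L / 2 ^ (k + 3))
  else if v = 2 then Set.Ioo (α + 8 * L) (α + 16 * L)
  else Set.Ioo xL α

def boxSet (n : ℕ) (xL α L : ℝ) (k : ℕ) : Set (Fin n → ℝ) :=
  Set.pi Set.univ fun i => boxIval xL α L k (i : ℕ)

lemma boxIval_meas (xL α L : ℝ) (k v : ℕ) : MeasurableSet (boxIval xL α L k v) := by
  unfold boxIval; split_ifs <;> exact measurableSet_Ioo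

lemma boxSet_meas (n : ℕ) (xL α L : ℝ) (k : ℕ) : MeasurableSet (boxSet n xL α L k) :=
  MeasurableSet.univ_pi fun i => boxIval_meas xL α L k i

lemma pow_facts (L : ℝ) (hL : 0 < L) (k : ℕ) :
    0 < L / 2 ^ (k + 3) ∧ L / 2 ^ (k + 3) ≤ L / 2 ^ (k + 1) ∧
      L / 2 ^ (k + 1) + L / 2 ^ (k + 3) ≤ L ∧ L / 2 ^ (k + 1) + L / 2 ^ (k + 3) ≤ L / 2 ^ k ∧
      L / 2 ^ (k + 3) ≤ L := by
  have ht : (0:ℝ) < 2 ^ k := by positivity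
  have e1 : (2:ℝ) ^ (k + 1) = 2 ^ k * 2 := by rw [pow_succ]
  have e3 : (2:ℝ) ^ (k + 3) = 2 ^ k * 8 := by rw [pow_add]; norm_num
  have h1 : (1:ℝ) ≤ 2 ^ k := one_le_pow₀ (by norm_num)
  have hs : L / (2 ^ k * 2) + L / (2 ^ k * 8) = (5 / 8) * (L / 2 ^ k) := by ring
  have hLk : L / 2 ^ k ≤ L := div_le_self hL.le h1
  have hLkpos : 0 < L / 2 ^ k := div_pos hL ht
  refine ⟨by positivity, ?_, ?_, ?_, ?_⟩
  · rw [e1, e3]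
    apply div_le_div_of_nonneg_left hL.le (by positivity) (by nlinarith)
  · rw [e1, e3, hs]; nlinarith
  · rw [e1, e3, hs]; nlinarith
  · rw [e3]
    have : L / (2 ^ k * 8) = (1 / 8) * (L / 2 ^ k) := by ring
    rw [this]; nlinarith

lemma boxSet_disjoint (n : ℕ) (hn : 2 ≤ n) (xL α L : ℝ) (hL : 0 < L) :
    Pairwise (Function.onFun Disjoint (boxSet n xL α L)) := by
  have key : ∀ k k' : ℕ, k < k' → Disjoint (boxSet n xL α L k) (boxSet n xL α L k') := by
    intro k k' hkk
    rw [Set.disjoint_left]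
    intro ω h1 h2
    unfold boxSet at h1 h2
    have hA := Set.mem_univ_pi.mp h1 ⟨1, by omega⟩
    have hB := Set.mem_univ_pi.mp h2 ⟨1, by omega⟩
    unfold boxIval at hA hB
    norm_num at hA hB
    obtain ⟨hA1, hA2⟩ := hA
    obtain ⟨hB1, hB2⟩ := hB
    have h21 : (2:ℝ) ^ (k + 2) ≤ 2 ^ (k' + 1) := pow_le_pow_right₀ one_le_two (by omega)
    have h23 : (2:ℝ) ^ (k + 2) ≤ 2 ^ (k' + 3) := pow_le_pow_right₀ one_le_two (by omega)
    have d1 : L / 2 ^ (k' + 1) ≤ L / 2 ^ (k + 2) :=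
      div_le_div_of_nonneg_left hL.le (by positivity) h21
    have d2 : L / 2 ^ (k' + 3) ≤ L / 2 ^ (k + 2) :=
      div_le_div_of_nonneg_left hL.le (by positivity) h23
    have dsum : L / 2 ^ (k + 2) + L / 2 ^ (k + 2) = L / 2 ^ (k + 1) := by
      have : (2:ℝ) ^ (k + 2) = 2 ^ (k + 1) * 2 := by rw [pow_succ]
      rw [this]
      ring
    linarith
  intro k k' hne
  rcases hne.lt_or_gt with hlt | hlt
  · exact key _ _ hlt
  · exact (key _ _ hlt).symm
lemma slope_bound (N s a b u01 L : ℝ) (hN : 0 < N)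
    (hid : s * (N * a * b * (a + b)) = b * (a + b) + u01 * (b - a))
    (hL : 0 < L) (ha : 0 < a) (haL : a ≤ L)
    (hb7 : 7 * L ≤ b) (hb16 : b ≤ 16 * L) (hu : u01 ≤ -254 * L) :
    s ≤ -4 / (N * a) := by
  have hb0 : 0 < b := by linarith
  have hprodpos : 0 < b * (a + b) := by positivity
  have hprod : b * (a + b) ≤ 272 * L ^ 2 := by nlinarith
  have hba : 6 * L ≤ b - a := by linarith
  have hnum1 : u01 * (b - a) ≤ (-254 * L) * (b - a) :=
    mul_le_mul_of_nonneg_right hu (by linarith)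
  have hnum2 : (-254 * L) * (b - a) ≤ (-254 * L) * (6 * L) := by nlinarith
  have hnum : b * (a + b) + u01 * (b - a) ≤ -1252 * L ^ 2 := by nlinarith
  rw [le_div_iff₀ (by positivity : 0 < N * a)]
  have hP : s * (N * a) * (b * (a + b)) ≤ -1252 * L ^ 2 := by
    calc s * (N * a) * (b * (a + b)) = s * (N * a * b * (a + b)) := by ring
    _ = b * (a + b) + u01 * (b - a) := hid
    _ ≤ -1252 * L ^ 2 := hnum
  nlinarith [mul_le_mul_of_nonneg_right hprod (le_of_lt (show (0:ℝ) < 4 by norm_num))]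

lemma sq_ge_of_le_neg {s t : ℝ} (ht : 0 < t) (hs : s ≤ -t) : t ^ 2 ≤ s ^ 2 := by nlinarith

set_option maxHeartbeats 2000000 in
lemma slope_formula (n : ℕ) (hn : 3 ≤ n) (K : ℝ → ℝ) (h xR : ℝ) (hh : 0 < h)
    (hK_supp : ∀ u, u ∉ Set.Icc (-1 : ℝ) 1 → K u = 0)
    (hK_pos : ∀ u ∈ Set.Ioc (-1 : ℝ) 0, 0 < K u)
    (ω : Fin n → ℝ) (i0 i1 i2 : Fin n)
    (hv0 : (i0 : ℕ) = 0) (hv1 : (i1 : ℕ) = 1) (hv2 : (i2 : ℕ) = 2)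
    (h0 : xR - h < ω i0) (h01 : ω i0 < ω i1) (h12 : ω i1 < ω i2) (h2 : ω i2 < xR)
    (hrest : ∀ j : Fin n, 3 ≤ (j : ℕ) → ω j < xR - h) :
    lpd2Slope n K h xR ω *
        ((n : ℝ) * (ω i1 - ω i0) * (ω i2 - ω i1) * (ω i2 - ω i0)) =
      (ω i2 - ω i1) * (ω i2 - ω i0) +
        (ω i0 + ω i1 - 2 * xR) * ((ω i2 - ω i1) - (ω i1 - ω i0)) := by
  have hN : (0:ℝ) < n := by exact_mod_cast Nat.lt_of_lt_of_le (by norm_num) hn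
  have hne01 : i0 ≠ i1 := fun e => by rw [Fin.ext_iff, hv0, hv1] at e; omega
  have hne02 : i0 ≠ i2 := fun e => by rw [Fin.ext_iff, hv0, hv2] at e; omega
  have hne12 : i1 ≠ i2 := fun e => by rw [Fin.ext_iff, hv1, hv2] at e; omega
  have hcases : ∀ j : Fin n, j = i0 ∨ j = i1 ∨ j = i2 ∨ 3 ≤ (j : ℕ) := by
    intro j
    rcases Nat.lt_or_ge (j : ℕ) 3 with hl | hr
    · interval_cases hj : (j : ℕ)
      · exact Or.inl (Fin.ext (by omega))
      · exact Or.inr (Or.inl (Fin.ext (by omega)))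
      · exact Or.inr (Or.inr (Or.inl (Fin.ext (by omega))))
    · exact Or.inr (Or.inr (Or.inr hr))
  have hwz : ∀ j : Fin n, 3 ≤ (j : ℕ) → K ((ω j - xR) / h) = 0 := by
    intro j hj
    apply hK_supp
    simp only [Set.mem_Icc, not_and_or, not_le]
    left
    rw [div_lt_iff₀ hh]
    linarith [hrest j hj]
  have hwposi : ∀ j : Fin n, xR - h < ω j → ω j < xR → 0 < K ((ω j - xR) / h) := by
    intro j hjl hjr
    apply hK_pos
    constructor
    · rw [lt_div_iff₀ hh]; linarith
    · apply div_nonpos_of_nonpos_of_nonneg <;> linarith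
  have hw0 : 0 < K ((ω i0 - xR) / h) := hwposi i0 h0 (by linarith)
  have hw1 : 0 < K ((ω i1 - xR) / h) := hwposi i1 (by linarith) (by linarith)
  have hw2 : 0 < K ((ω i2 - xR) / h) := hwposi i2 (by linarith) h2
  have hmem12 : i0 ∉ ({i1, i2} : Finset (Fin n)) := by simp [hne01, hne02]
  have hmem2 : i1 ∉ ({i2} : Finset (Fin n)) := by simp [hne12]
  have hS : ∀ g : Fin n → ℝ, ∑ i, K ((ω i - xR) / h) * g i =
      K ((ω i0 - xR) / h) * g i0 + K ((ω i1 - xR) / h) * g i1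
        + K ((ω i2 - xR) / h) * g i2 := by
    intro g
    rw [← Finset.sum_subset (Finset.subset_univ ({i0, i1, i2} : Finset (Fin n)))]
    · rw [Finset.sum_insert hmem12, Finset.sum_insert hmem2, Finset.sum_singleton]
      ring
    · intro x _ hx
      rcases hcases x with e | e | e | hge
      · exact absurd (by simp [e]) hx
      · exact absurd (by simp [e]) hx
      · exact absurd (by simp [e]) hx
      · rw [hwz x hge, zero_mul]
  have hflt : ∀ j : Fin n, 3 ≤ (j : ℕ) → ω j < ω i0 := fun j hj => by
    linarith [hrest j hj]
  have hcard2 : (Finset.univ.filter fun j => ω j ≤ ω i2) = Finset.univ := by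
    apply Finset.filter_true_of_mem
    intro j _
    rcases hcases j with e | e | e | hge
    · rw [e]; linarith
    · rw [e]; linarith
    · rw [e]
    · linarith [hflt j hge]
  have hcard1 : (Finset.univ.filter fun j => ω j ≤ ω i1) = Finset.univ.erase i2 := by
    ext j
    simp only [Finset.mem_filter, Finset.mem_erase, Finset.mem_univ, true_and, and_true]
    constructor
    · intro hle
      intro e; rw [e] at hle; linarith
    · intro hne
      rcases hcases j with e | e | e | hge
      · rw [e]; linarith
      · rw [e]
      · exact absurd e hne
      · linarith [hflt j hge]
  have hcard0 : (Finset.univ.filter fun j => ω j ≤ ω i0) =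
      (Finset.univ.erase i2).erase i1 := by
    ext j
    simp only [Finset.mem_filter, Finset.mem_erase, Finset.mem_univ, true_and, and_true]
    constructor
    · intro hle
      refine ⟨fun e => by rw [e] at hle; linarith, fun e => by rw [e] at hle; linarith⟩
    · rintro ⟨hne1, hne2⟩
      rcases hcases j with e | e | e | hge
      · rw [e]
      · exact absurd e hne1
      · exact absurd e hne2
      · linarith [hflt j hge]
  -- value of the empirical CDF at the three active points
  have hV0 : ((n:ℝ))⁻¹ * ((Finset.univ.filter fun j => ω j ≤ ω i0).card : ℝ)
      = ((n : ℝ) - 2) / n := by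
    rw [hcard0, Finset.card_erase_of_mem (Finset.mem_erase.2 ⟨hne12, Finset.mem_univ _⟩),
      Finset.card_erase_of_mem (Finset.mem_univ _), Finset.card_univ, Fintype.card_fin]
    rw [Nat.cast_sub (by omega), Nat.cast_sub (by omega)]
    push_cast
    field_simp
    ring
  have hV1 : ((n:ℝ))⁻¹ * ((Finset.univ.filter fun j => ω j ≤ ω i1).card : ℝ)
      = ((n : ℝ) - 1) / n := by
    rw [hcard1, Finset.card_erase_of_mem (Finset.mem_univ _), Finset.card_univ,
      Fintype.card_fin, Nat.cast_sub (by omega)]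
    push_cast
    field_simp
  have hV2 : ((n:ℝ))⁻¹ * ((Finset.univ.filter fun j => ω j ≤ ω i2).card : ℝ) = 1 := by
    rw [hcard2, Finset.card_univ, Fintype.card_fin]
    field_simp
  have ha : (0:ℝ) < ω i1 - ω i0 := by linarith
  have hb : (0:ℝ) < ω i2 - ω i1 := by linarith
  have hc : (0:ℝ) < ω i2 - ω i0 := by linarith
  set B2 : ℝ := ((ω i1 - ω i0) - (ω i2 - ω i1)) /
      ((n:ℝ) * (ω i1 - ω i0) * (ω i2 - ω i1) * (ω i2 - ω i0)) with hB2
  set B1 : ℝ := 1 / ((n:ℝ) * (ω i1 - ω i0)) - B2 * (ω i0 + ω i1 - 2 * xR) with hB1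
  set B0 : ℝ := ((n:ℝ) - 2) / n - B1 * (ω i0 - xR) - B2 * (ω i0 - xR) ^ 2 with hB0
  set βv : Fin 3 → ℝ := ![B0, B1, B2] with hβv
  have key0 : B0 + B1 * (ω i0 - xR) + B2 * (ω i0 - xR) ^ 2 = ((n:ℝ) - 2) / n := by
    rw [hB0]; ring
  have key1 : B0 + B1 * (ω i1 - xR) + B2 * (ω i1 - xR) ^ 2 = ((n:ℝ) - 1) / n := by
    rw [hB0, hB1, hB2]
    field_simp
    ring
  have key2 : B0 + B1 * (ω i2 - xR) + B2 * (ω i2 - xR) ^ 2 = 1 := by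
    rw [hB0, hB1, hB2]
    field_simp
    ring
  simp only [lpd2Slope]
  set G : Matrix (Fin 3) (Fin 3) ℝ :=
    Matrix.of (fun k l : Fin 3 =>
      ∑ x : Fin n, K ((ω x - xR) / h) * (ω x - xR) ^ ((k : ℕ) + (l : ℕ))) with hG
  set bv : Fin 3 → ℝ := fun k : Fin 3 =>
    ∑ x : Fin n, K ((ω x - xR) / h) * (ω x - xR) ^ (k : ℕ) *
      ((n : ℝ)⁻¹ * ((Finset.filter (fun j => ω j ≤ ω x) Finset.univ).card : ℝ)) with hbv
  have hGapp : ∀ k l : Fin 3, G k l =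
      K ((ω i0 - xR) / h) * (ω i0 - xR) ^ ((k:ℕ)+(l:ℕ)) +
      K ((ω i1 - xR) / h) * (ω i1 - xR) ^ ((k:ℕ)+(l:ℕ)) +
      K ((ω i2 - xR) / h) * (ω i2 - xR) ^ ((k:ℕ)+(l:ℕ)) := by
    intro k l
    rw [hG, Matrix.of_apply, hS (fun x => (ω x - xR) ^ ((k:ℕ)+(l:ℕ)))]
  have hbapp : ∀ k : Fin 3, bv k =
      K ((ω i0 - xR) / h) * ((ω i0 - xR) ^ (k:ℕ) * (((n:ℝ) - 2) / n)) +
      K ((ω i1 - xR) / h) * ((ω i1 - xR) ^ (k:ℕ) * (((n:ℝ) - 1) / n)) +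
      K ((ω i2 - xR) / h) * ((ω i2 - xR) ^ (k:ℕ) * 1) := by
    intro k
    rw [hbv]
    simp only [mul_assoc]
    rw [hS (fun x => (ω x - xR) ^ (k:ℕ) *
      ((n : ℝ)⁻¹ * ((Finset.filter (fun j => ω j ≤ ω x) Finset.univ).card : ℝ)))]
    beta_reduce
    rw [hV0, hV1, hV2]
  have hdetval : G.det = K ((ω i0 - xR) / h) * K ((ω i1 - xR) / h) * K ((ω i2 - xR) / h) *
      ((ω i1 - ω i0) * (ω i2 - ω i1) * (ω i2 - ω i0)) ^ 2 := by
    rw [Matrix.det_fin_three]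
    rw [hGapp 0 0, hGapp 0 1, hGapp 0 2, hGapp 1 0, hGapp 1 1, hGapp 1 2,
      hGapp 2 0, hGapp 2 1, hGapp 2 2]
    norm_num
    ring
  have hdet : G.det ≠ 0 := by rw [hdetval]; positivity
  have hGb : G *ᵥ βv = bv := by
    funext k
    rw [Matrix.mulVec, dotProduct, Fin.sum_univ_three,
      hGapp k 0, hGapp k 1, hGapp k 2, hbapp k]
    have e0 : βv 0 = B0 := rfl
    have e1 : βv 1 = B1 := rfl
    have e2 : βv 2 = B2 := rfl
    rw [e0, e1, e2]
    fin_cases k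
    · norm_num
      linear_combination (K ((ω i0 - xR) / h)) * key0 + (K ((ω i1 - xR) / h)) * key1 +
        (K ((ω i2 - xR) / h)) * key2
    · norm_num
      linear_combination (K ((ω i0 - xR) / h) * (ω i0 - xR)) * key0 +
        (K ((ω i1 - xR) / h) * (ω i1 - xR)) * key1 +
        (K ((ω i2 - xR) / h) * (ω i2 - xR)) * key2
    · norm_num
      linear_combination (K ((ω i0 - xR) / h) * (ω i0 - xR) ^ 2) * key0 +
        (K ((ω i1 - xR) / h) * (ω i1 - xR) ^ 2) * key1 +
        (K ((ω i2 - xR) / h) * (ω i2 - xR) ^ 2) * key2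
  have hinv : G⁻¹ *ᵥ bv = βv := by
    rw [← hGb, Matrix.mulVec_mulVec, Matrix.nonsing_inv_mul G (isUnit_iff_ne_zero.2 hdet),
      Matrix.one_mulVec]
  rw [hinv, hβv]
  have e1 : (![B0, B1, B2] : Fin 3 → ℝ) 1 = B1 := rfl
  rw [e1, hB1, hB2]
  field_simp
  ring

set_option maxHeartbeats 1000000 in
/-- Corollary 1: Let `X₁, …, Xₙ` be i.i.d. with density `f` on `[x_L, x_R)`,
`0 < δ ≤ f ≤ Δ`, and let `K` be nonnegative and compactly supported (vanishing outside
`[-1,1]`, positive on `(-1,0]`). Then the local quadratic (p = 2) local polynomial density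
estimator at `x_R` does not have a finite second moment. -/
theorem lpd_quadratic_infinite_second_moment
    (n : ℕ) (hn : 3 ≤ n) (f K : ℝ → ℝ) (xL xR δ Δ h : ℝ)
    (hδ : 0 < δ) (hΔ : δ ≤ Δ)
    (hf_meas : Measurable f)
    (hf_supp : ∀ x, x ∉ Set.Ico xL xR → f x = 0)
    (hf_lb : ∀ x ∈ Set.Ico xL xR, δ ≤ f x)
    (hf_ub : ∀ x ∈ Set.Ico xL xR, f x ≤ Δ)
    (hf_dens : ∫ x, f x = 1)
    (hK_nonneg : ∀ u, 0 ≤ K u)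
    (hK_compact : HasCompactSupport K)
    (hK_supp : ∀ u, u ∉ Set.Icc (-1 : ℝ) 1 → K u = 0)
    (hK_pos : ∀ u ∈ Set.Ioc (-1 : ℝ) 0, 0 < K u)
    (hh : 0 < h) (hhlt : h < xR - xL) :
    ∫⁻ ω, ENNReal.ofReal ((lpd2Slope n K h xR ω) ^ 2)
      ∂(Measure.pi fun _ : Fin n => volume.withDensity fun x => ENNReal.ofReal (f x)) = ⊤ := by
  have hn0 : 0 < n := by omega
  have hNpos : (0:ℝ) < n := by exact_mod_cast hn0
  set L : ℝ := h / 128 with hLdef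
  have hL : 0 < L := by positivity
  have h128 : h = 128 * L := by rw [hLdef]; ring
  have hxLh : xL < xR - h := by linarith
  set μ : Measure ℝ := volume.withDensity fun x => ENNReal.ofReal (f x) with hμ
  -- measure of subintervals of [xL, xR)
  have hfac : ∀ p q : ℝ, xL ≤ p → q ≤ xR → ENNReal.ofReal (δ * (q - p)) ≤ μ (Set.Ioo p q) := by
    intro p q hp hq
    rcases le_or_gt q p with hqp | hpq
    · have : δ * (q - p) ≤ 0 := mul_nonpos_of_nonneg_of_nonpos hδ.le (by linarith)
      rw [ENNReal.ofReal_of_nonpos this]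
      exact zero_le
    · rw [hμ, withDensity_apply _ measurableSet_Ioo, ENNReal.ofReal_mul hδ.le]
      calc ENNReal.ofReal δ * ENNReal.ofReal (q - p)
          = ENNReal.ofReal δ * volume (Set.Ioo p q) := by rw [Real.volume_Ioo]
        _ = ∫⁻ _ in Set.Ioo p q, ENNReal.ofReal δ := (setLIntegral_const _ _).symm
        _ ≤ ∫⁻ x in Set.Ioo p q, ENNReal.ofReal (f x) := by
            apply setLIntegral_mono' measurableSet_Ioo
            intro x hx
            exact ENNReal.ofReal_le_ofReal
              (hf_lb x ⟨le_trans hp hx.1.le, lt_of_lt_of_le hx.2 hq⟩)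
  -- the three special indices
  have hne01 : (⟨0, by omega⟩ : Fin n) ≠ ⟨1, by omega⟩ := by simp [Fin.ext_iff]
  have hne02 : (⟨0, by omega⟩ : Fin n) ≠ ⟨2, by omega⟩ := by simp [Fin.ext_iff]
  have hne12 : (⟨1, by omega⟩ : Fin n) ≠ ⟨2, by omega⟩ := by simp [Fin.ext_iff]
  -- pointwise lower bound on each box
  have hpoint : ∀ k : ℕ, ∀ ω ∈ boxSet n xL (xR - h) L k,
      ENNReal.ofReal ((4 * 2 ^ k / ((n:ℝ) * L)) ^ 2) ≤
        ENNReal.ofReal ((lpd2Slope n K h xR ω) ^ 2) := by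
    intro k ω hω
    obtain ⟨hp0, hp1, hp2, hp3, hp4⟩ := pow_facts L hL k
    have hm := Set.mem_univ_pi.mp hω
    have h0 := hm ⟨0, by omega⟩
    have h1 := hm ⟨1, by omega⟩
    have h2 := hm ⟨2, by omega⟩
    rw [show ((⟨0, by omega⟩ : Fin n) : ℕ) = 0 from rfl] at h0
    rw [show ((⟨1, by omega⟩ : Fin n) : ℕ) = 1 from rfl] at h1
    rw [show ((⟨2, by omega⟩ : Fin n) : ℕ) = 2 from rfl] at h2
    unfold boxIval at h0 h1 h2
    norm_num at h0 h1 h2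
    obtain ⟨h0l, h0r⟩ := h0
    obtain ⟨h1l, h1r⟩ := h1
    obtain ⟨h2l, h2r⟩ := h2
    have hrest : ∀ j : Fin n, 3 ≤ (j : ℕ) → ω j < xR - h := by
      intro j hj
      have hmj := hm j
      unfold boxIval at hmj
      rw [if_neg (by omega), if_neg (by omega), if_neg (by omega)] at hmj
      exact hmj.2
    have hid := slope_formula n hn K h xR hh hK_supp hK_pos ω
      ⟨0, by omega⟩ ⟨1, by omega⟩ ⟨2, by omega⟩ rfl rfl rfl
      h0l (by linarith) (by linarith) (by linarith) hrest
    have hre : ω ⟨2, by omega⟩ - ω ⟨0, by omega⟩ =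
        (ω ⟨1, by omega⟩ - ω ⟨0, by omega⟩) + (ω ⟨2, by omega⟩ - ω ⟨1, by omega⟩) := by ring
    rw [hre] at hid
    have hsle := slope_bound (n:ℝ) (lpd2Slope n K h xR ω)
      (ω ⟨1, by omega⟩ - ω ⟨0, by omega⟩) (ω ⟨2, by omega⟩ - ω ⟨1, by omega⟩)
      (ω ⟨0, by omega⟩ + ω ⟨1, by omega⟩ - 2 * xR) L hNpos hid hL
      (by linarith) (by linarith) (by linarith) (by linarith) (by linarith)
    have hak : ω ⟨1, by omega⟩ - ω ⟨0, by omega⟩ ≤ L / 2 ^ k := by linarith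
    have hapos : (0:ℝ) < ω ⟨1, by omega⟩ - ω ⟨0, by omega⟩ := by linarith
    have hqpos : (0:ℝ) < 4 * 2 ^ k / ((n:ℝ) * L) := by positivity
    have hq : 4 * 2 ^ k / ((n:ℝ) * L) ≤ 4 / ((n:ℝ) * (ω ⟨1, by omega⟩ - ω ⟨0, by omega⟩)) := by
      rw [div_le_div_iff₀ (by positivity) (by positivity)]
      have h2kpos : (0:ℝ) < 2 ^ k := by positivity
      have : (ω ⟨1, by omega⟩ - ω ⟨0, by omega⟩) * 2 ^ k ≤ L := by
        rw [le_div_iff₀ h2kpos] at hak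
        exact hak
      nlinarith
    have hfin : lpd2Slope n K h xR ω ≤ -(4 * 2 ^ k / ((n:ℝ) * L)) := by
      have hneg : (-4:ℝ) / ((n:ℝ) * (ω ⟨1, by omega⟩ - ω ⟨0, by omega⟩)) =
          -(4 / ((n:ℝ) * (ω ⟨1, by omega⟩ - ω ⟨0, by omega⟩))) := by ring
      rw [hneg] at hsle
      linarith
    exact ENNReal.ofReal_le_ofReal (sq_ge_of_le_neg hqpos hfin)
  -- lower bound on box measures
  have hprodLB : ∀ k : ℕ,
      ENNReal.ofReal ((δ * (L / 2 ^ (k+3))) * (δ * (L / 2 ^ (k+3))) * (δ * (8*L)) *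
        (δ * (xR - h - xL)) ^ (n-3)) ≤
      (Measure.pi fun _ : Fin n => μ) (boxSet n xL (xR - h) L k) := by
    intro k
    obtain ⟨hp0, hp1, hp2, hp3, hp4⟩ := pow_facts L hL k
    have hq16 : xR - h + 16 * L ≤ xR := by linarith
    have hp1pos : (0:ℝ) < L / 2 ^ (k+1) := by positivity
    rw [show boxSet n xL (xR - h) L k =
      Set.pi Set.univ (fun i : Fin n => boxIval xL (xR - h) L k (i:ℕ)) from rfl, Measure.pi_pi]
    have hfacI : ∀ i : Fin n,
        (if (i:ℕ) = 0 then ENNReal.ofReal (δ * (L / 2 ^ (k+3)))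
          else if (i:ℕ) = 1 then ENNReal.ofReal (δ * (L / 2 ^ (k+3)))
          else if (i:ℕ) = 2 then ENNReal.ofReal (δ * (8*L))
          else ENNReal.ofReal (δ * (xR - h - xL)))
          ≤ μ (boxIval xL (xR - h) L k (i:ℕ)) := by
      intro i
      unfold boxIval
      split_ifs with hv0 hv1 hv2
      · have := hfac (xR - h) (xR - h + L / 2 ^ (k+3)) (by linarith) (by linarith)
        rw [show xR - h + L / 2 ^ (k+3) - (xR - h) = L / 2 ^ (k+3) from by ring] at this
        exact this
      · have := hfac (xR - h + L / 2 ^ (k+1)) (xR - h + L / 2 ^ (k+1) + L / 2 ^ (k+3))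
          (by linarith) (by linarith)
        rw [show xR - h + L / 2 ^ (k+1) + L / 2 ^ (k+3) - (xR - h + L / 2 ^ (k+1))
          = L / 2 ^ (k+3) from by ring] at this
        exact this
      · have := hfac (xR - h + 8 * L) (xR - h + 16 * L) (by linarith) (by linarith)
        rw [show xR - h + 16 * L - (xR - h + 8 * L) = 8 * L from by ring] at this
        exact this
      · exact hfac xL (xR - h) (le_refl xL) (by linarith)
    refine le_trans (le_of_eq ?_) (Finset.prod_le_prod' fun i _ => hfacI i)
    -- compute the product of the if-function
    have hsub : ({⟨0, by omega⟩, ⟨1, by omega⟩, ⟨2, by omega⟩} : Finset (Fin n)) ⊆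
        Finset.univ := Finset.subset_univ _
    rw [← Finset.prod_sdiff hsub]
    have hmem12 : (⟨0, by omega⟩ : Fin n) ∉ ({⟨1, by omega⟩, ⟨2, by omega⟩} : Finset (Fin n)) := by
      simp [Fin.ext_iff]
    have hmem2 : (⟨1, by omega⟩ : Fin n) ∉ ({⟨2, by omega⟩} : Finset (Fin n)) := by
      simp [Fin.ext_iff]
    have hTprod : ∏ i ∈ ({⟨0, by omega⟩, ⟨1, by omega⟩, ⟨2, by omega⟩} : Finset (Fin n)),
        (if (i:ℕ) = 0 then ENNReal.ofReal (δ * (L / 2 ^ (k+3)))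
          else if (i:ℕ) = 1 then ENNReal.ofReal (δ * (L / 2 ^ (k+3)))
          else if (i:ℕ) = 2 then ENNReal.ofReal (δ * (8*L))
          else ENNReal.ofReal (δ * (xR - h - xL))) =
        ENNReal.ofReal (δ * (L / 2 ^ (k+3))) * ENNReal.ofReal (δ * (L / 2 ^ (k+3))) *
          ENNReal.ofReal (δ * (8*L)) := by
      rw [Finset.prod_insert hmem12, Finset.prod_insert hmem2, Finset.prod_singleton]
      norm_num
      ring
    have hcard3 : ({⟨0, by omega⟩, ⟨1, by omega⟩, ⟨2, by omega⟩} : Finset (Fin n)).card = 3 := by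
      rw [Finset.card_insert_of_notMem hmem12, Finset.card_insert_of_notMem hmem2,
        Finset.card_singleton]
    have hcompl : (∏ i ∈ (Finset.univ \
        ({⟨0, by omega⟩, ⟨1, by omega⟩, ⟨2, by omega⟩} : Finset (Fin n))),
        (if (i:ℕ) = 0 then ENNReal.ofReal (δ * (L / 2 ^ (k+3)))
          else if (i:ℕ) = 1 then ENNReal.ofReal (δ * (L / 2 ^ (k+3)))
          else if (i:ℕ) = 2 then ENNReal.ofReal (δ * (8*L))
          else ENNReal.ofReal (δ * (xR - h - xL)))) =
        ENNReal.ofReal (δ * (xR - h - xL)) ^ (n - 3) := by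
      calc (∏ i ∈ (Finset.univ \
          ({⟨0, by omega⟩, ⟨1, by omega⟩, ⟨2, by omega⟩} : Finset (Fin n))),
          (if (i:ℕ) = 0 then ENNReal.ofReal (δ * (L / 2 ^ (k+3)))
            else if (i:ℕ) = 1 then ENNReal.ofReal (δ * (L / 2 ^ (k+3)))
            else if (i:ℕ) = 2 then ENNReal.ofReal (δ * (8*L))
            else ENNReal.ofReal (δ * (xR - h - xL)))) =
          ∏ _i ∈ (Finset.univ \
          ({⟨0, by omega⟩, ⟨1, by omega⟩, ⟨2, by omega⟩} : Finset (Fin n))),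
            ENNReal.ofReal (δ * (xR - h - xL)) := by
            apply Finset.prod_congr rfl
            intro i hi
            simp only [Finset.mem_sdiff, Finset.mem_univ, true_and, Finset.mem_insert,
              Finset.mem_singleton] at hi
            push_neg at hi
            obtain ⟨h0', h1', h2'⟩ := hi
            have hv0' : (i:ℕ) ≠ 0 := fun e => h0' (Fin.ext e)
            have hv1' : (i:ℕ) ≠ 1 := fun e => h1' (Fin.ext e)
            have hv2' : (i:ℕ) ≠ 2 := fun e => h2' (Fin.ext e)
            rw [if_neg hv0', if_neg hv1', if_neg hv2']
        _ = ENNReal.ofReal (δ * (xR - h - xL)) ^ (n - 3) := by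
            rw [Finset.prod_const, Finset.card_sdiff_of_subset hsub, Finset.card_univ,
              Fintype.card_fin, hcard3]
    rw [hTprod, hcompl]
    rw [ENNReal.ofReal_mul (by positivity), ENNReal.ofReal_mul (by positivity),
      ENNReal.ofReal_mul (by positivity),
      ENNReal.ofReal_pow (mul_nonneg hδ.le (by linarith : (0:ℝ) ≤ xR - h - xL))]
    ring
  -- per-box integral lower bound
  set Cst : ℝ := 2 * δ ^ 3 * L * (δ * (xR - h - xL)) ^ (n - 3) / (n:ℝ) ^ 2 with hCstdef
  have hbox : ∀ k : ℕ, ENNReal.ofReal Cst ≤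
      ∫⁻ ω in boxSet n xL (xR - h) L k, ENNReal.ofReal ((lpd2Slope n K h xR ω) ^ 2)
        ∂(Measure.pi fun _ : Fin n => μ) := by
    intro k
    have heq : Cst = (4 * 2 ^ k / ((n:ℝ) * L)) ^ 2 *
        ((δ * (L / 2 ^ (k+3))) * (δ * (L / 2 ^ (k+3))) * (δ * (8*L)) *
          (δ * (xR - h - xL)) ^ (n-3)) := by
      rw [hCstdef]
      have e3 : (2:ℝ) ^ (k+3) = 2 ^ k * 8 := by rw [pow_add]; norm_num
      rw [e3]
      have h2kne : ((2:ℝ) ^ k) ≠ 0 := by positivity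
      have hLne : L ≠ 0 := hL.ne'
      have hnne : ((n:ℝ)) ≠ 0 := hNpos.ne'
      field_simp
      ring
    calc ENNReal.ofReal Cst
        = ENNReal.ofReal ((4 * 2 ^ k / ((n:ℝ) * L)) ^ 2) *
            ENNReal.ofReal ((δ * (L / 2 ^ (k+3))) * (δ * (L / 2 ^ (k+3))) * (δ * (8*L)) *
              (δ * (xR - h - xL)) ^ (n-3)) := by
          rw [← ENNReal.ofReal_mul (by positivity), ← heq]
      _ ≤ ENNReal.ofReal ((4 * 2 ^ k / ((n:ℝ) * L)) ^ 2) *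
            (Measure.pi fun _ : Fin n => μ) (boxSet n xL (xR - h) L k) :=
          mul_le_mul_right (hprodLB k) _
      _ = ∫⁻ _ in boxSet n xL (xR - h) L k,
            ENNReal.ofReal ((4 * 2 ^ k / ((n:ℝ) * L)) ^ 2) ∂(Measure.pi fun _ : Fin n => μ) := by
          rw [setLIntegral_const]
      _ ≤ ∫⁻ ω in boxSet n xL (xR - h) L k,
            ENNReal.ofReal ((lpd2Slope n K h xR ω) ^ 2) ∂(Measure.pi fun _ : Fin n => μ) :=
          setLIntegral_mono' (boxSet_meas n xL (xR - h) L k) (hpoint k)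
  have hCstpos : 0 < Cst := by
    have hM : 0 < δ * (xR - h - xL) := mul_pos hδ (by linarith)
    rw [hCstdef]
    exact div_pos (mul_pos (by positivity) (pow_pos hM _)) (by positivity)
  refine top_unique ?_
  calc (⊤:ENNReal) = ∑' (_ : ℕ), ENNReal.ofReal Cst :=
        (ENNReal.tsum_const_eq_top_of_ne_zero (ENNReal.ofReal_pos.mpr hCstpos).ne').symm
    _ ≤ ∑' k : ℕ, ∫⁻ ω in boxSet n xL (xR - h) L k,
          ENNReal.ofReal ((lpd2Slope n K h xR ω) ^ 2) ∂(Measure.pi fun _ : Fin n => μ) :=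
        ENNReal.tsum_le_tsum hbox
    _ = ∫⁻ ω in ⋃ k : ℕ, boxSet n xL (xR - h) L k,
          ENNReal.ofReal ((lpd2Slope n K h xR ω) ^ 2) ∂(Measure.pi fun _ : Fin n => μ) :=
        (lintegral_iUnion (fun k => boxSet_meas n xL (xR - h) L k)
          (boxSet_disjoint n (by omega) xL (xR - h) L hL) _).symm
    _ ≤ ∫⁻ ω, ENNReal.ofReal ((lpd2Slope n K h xR ω) ^ 2) ∂(Measure.pi fun _ : Fin n => μ) :=
        setLIntegral_le_lintegral _ _
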